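/- The derivative with respect to z of the Hurwitz multizeta function He_+^{(s_1,...,s_r)}(z) = Σ_{0 < n_r < ... < n_1} ∏_i (n_i+z)^{-s_i} equals -Σ_{i=1}^r s_i · He_+^{s + e_i}(z), where s + e_i is the sequence with s_i replaced by s_i + 1. -/

import Mathlib

open Finset

section Aux

lemma hmz_summable_pi_prod {g : ℕ → ℝ} (hg : Summable g) (h0 : ∀ n, 0 ≤ g n) (r : ℕ) :
    Summable (fun n : Fin r → ℕ => ∏ i, g (n i)) := by
  induction r with
  | zero => exact Summable.of_finite
  | succ r ih =>
    rw [← (Fin.consEquiv fun _ : Fin (r+1) => ℕ).summable_iff]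
    have h : ((fun n : Fin (r+1) → ℕ => ∏ i, g (n i)) ∘ (Fin.consEquiv fun _ => ℕ)) =
        fun p : ℕ × (Fin r → ℕ) => g p.1 * ∏ i, g (p.2 i) := by
      funext p
      simp only [Function.comp_apply, Fin.consEquiv_apply, Fin.prod_univ_succ, Fin.cons_zero,
        Fin.cons_succ]
    rw [h]
    exact Summable.mul_of_nonneg (f := g) (g := fun v : Fin r → ℕ => ∏ i, g (v i)) hg ih
      (fun n => h0 n) (fun v => Finset.prod_nonneg fun i _ => h0 _)

lemma hmz_prod_bound (r : ℕ) (hr : 0 < r) (t : Fin r → ℕ) (h1 : ∀ i, 1 ≤ t i)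
    (h2 : 2 ≤ t ⟨0, hr⟩) (n : Fin r → ℕ) (hanti : StrictAnti n) (hpos : ∀ i, 0 < n i) :
    ∏ i, (((n i : ℝ)) ^ t i)⁻¹ ≤ ∏ i, ((n i : ℝ) ^ (1 + 1/r : ℝ))⁻¹ := by
  set i0 : Fin r := ⟨0, hr⟩ with hi0
  have hone : ∀ i, (1:ℝ) ≤ (n i : ℝ) := fun i => by exact_mod_cast hpos i
  have hposR : ∀ i, (0:ℝ) < (n i : ℝ) := fun i => Nat.cast_pos.mpr (hpos i)
  have hle : ∀ i, (n i : ℝ) ≤ (n i0 : ℝ) := by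
    intro i
    exact_mod_cast hanti.antitone (by simp [hi0, Fin.le_def])
  rw [Finset.prod_inv_distrib, Finset.prod_inv_distrib]
  apply inv_anti₀
  · exact Finset.prod_pos fun i _ => Real.rpow_pos_of_pos (hposR i) _
  have key : ∏ i, ((n i : ℝ)) ^ ((1:ℝ) + 1/r) ≤ (∏ i, (n i : ℝ)) * (n i0 : ℝ) := by
    have h1' : ∀ i, ((n i : ℝ)) ^ ((1:ℝ) + 1/r) = (n i : ℝ) * ((n i : ℝ)) ^ (1/(r:ℝ)) := by
      intro i
      rw [Real.rpow_add (hposR i), Real.rpow_one]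
    simp_rw [h1']
    rw [Finset.prod_mul_distrib]
    apply mul_le_mul_of_nonneg_left _ (Finset.prod_nonneg fun i _ => (hposR i).le)
    calc ∏ i, ((n i : ℝ)) ^ (1/(r:ℝ))
        ≤ ∏ _i : Fin r, ((n i0 : ℝ)) ^ (1/(r:ℝ)) := by
          apply Finset.prod_le_prod (fun i _ => (Real.rpow_pos_of_pos (hposR i) _).le)
          intro i _
          exact Real.rpow_le_rpow (hposR i).le (hle i) (by positivity)
      _ = (n i0 : ℝ) := by
          rw [Finset.prod_const, Finset.card_univ, Fintype.card_fin,
            ← Real.rpow_natCast (((n i0 : ℝ)) ^ (1/(r:ℝ))) r, ← Real.rpow_mul (hposR i0).le]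
          rw [one_div, inv_mul_cancel₀ (by exact_mod_cast hr.ne'), Real.rpow_one]
  refine key.trans ?_
  have heq : (∏ i, (n i : ℝ)) * (n i0 : ℝ) = ∏ i, ((n i : ℝ)) ^ (if i = i0 then 2 else 1) := by
    have h2' : ∀ i : Fin r, ((n i : ℝ)) ^ (if i = i0 then 2 else 1)
        = (n i : ℝ) * (if i = i0 then (n i : ℝ) else 1) := by
      intro i; split <;> ring
    simp_rw [h2']
    rw [Finset.prod_mul_distrib, Finset.prod_ite_eq' Finset.univ i0 (fun i => (n i : ℝ))]
    simp
  rw [heq]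
  apply Finset.prod_le_prod (fun i _ => by positivity)
  intro i _
  apply pow_le_pow_right₀ (hone i)
  split
  · next h => rw [h]; exact h2
  · exact h1 i

lemma hmz_exists_ball_bound (z₀ : ℂ) (hz : ∀ m : ℤ, z₀ ≠ m) :
    ∃ ε : ℝ, 0 < ε ∧ ∃ c : ℝ, 0 < c ∧ c ≤ 1 ∧ ∀ z ∈ Metric.ball z₀ ε, ∀ m : ℕ, 1 ≤ m →
      c * m ≤ ‖(m : ℂ) + z‖ := by
  set K : ℕ := ⌈‖z₀‖⌉₊ + 1 with hK
  have hK1 : 1 ≤ K := Nat.le_add_left 1 _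
  have hz₀K : ‖z₀‖ + 1 ≤ (K : ℝ) := by
    have := Nat.le_ceil (‖z₀‖)
    push_cast [hK]
    linarith
  have hS : (Finset.Icc 1 (2*K)).Nonempty := by
    refine ⟨1, Finset.mem_Icc.mpr ⟨le_refl _, by omega⟩⟩
  set δ : ℝ := (Finset.Icc 1 (2*K)).inf' hS (fun m => ‖(m : ℂ) + z₀‖) with hδ
  have hδpos : 0 < δ := by
    rw [hδ, Finset.lt_inf'_iff]
    intro m hm
    have : (m : ℂ) + z₀ ≠ 0 := by
      intro h
      exact hz (-(m : ℤ)) (by push_cast; linear_combination h)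
    exact norm_pos_iff.mpr this
  refine ⟨min (δ/2) 1, by positivity, min (δ/(4*K)) (1/2), by positivity,
    (min_le_right _ _).trans (by norm_num), ?_⟩
  intro z hzball m hm
  have hzd : ‖z - z₀‖ < min (δ/2) 1 := by
    rwa [Metric.mem_ball, Complex.dist_eq] at hzball
  by_cases hcase : m ≤ 2*K
  · have h1 : δ ≤ ‖(m : ℂ) + z₀‖ :=
      Finset.inf'_le _ (Finset.mem_Icc.mpr ⟨hm, hcase⟩)
    have h2 : ‖(m : ℂ) + z₀‖ ≤ ‖(m : ℂ) + z‖ + ‖z - z₀‖ := by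
      have h := norm_add_le ((m : ℂ) + z) (z₀ - z)
      have e : (m : ℂ) + z + (z₀ - z) = (m : ℂ) + z₀ := by ring
      rw [e] at h
      have e2 : ‖z₀ - z‖ = ‖z - z₀‖ := by
        exact norm_sub_rev _ _
      linarith [h, e2.le]
    have h3 : min (δ/(4*K)) (1/2) * m ≤ (δ/(4*K)) * (2*K) := by
      apply mul_le_mul (min_le_left _ _) (by exact_mod_cast hcase) (by positivity) (by positivity)
    have h4 : (δ/(4*K)) * (2*K) = δ/2 := by
      field_simp
      ring
    have h5 : ‖z - z₀‖ ≤ δ/2 := le_of_lt (lt_of_lt_of_le hzd (min_le_left _ _))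
    linarith
  · push_neg at hcase
    have hmK : (2*K : ℝ) < m := by exact_mod_cast hcase
    have habs : ‖z‖ ≤ ‖z₀‖ + 1 := by
      have h := norm_add_le z₀ (z - z₀)
      have e : z₀ + (z - z₀) = z := by ring
      rw [e] at h
      have h1 : ‖z - z₀‖ ≤ 1 := le_of_lt (lt_of_lt_of_le hzd (min_le_right _ _))
      linarith
    have h2 : (m : ℝ) - ‖z‖ ≤ ‖(m : ℂ) + z‖ := by
      have h := norm_add_le ((m : ℂ) + z) (-z)
      simp only [add_neg_cancel_right] at h
      have e : ‖((m : ℕ) : ℂ)‖ = (m : ℝ) := by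
        rw [Complex.norm_natCast]
      rw [norm_neg] at h
      linarith [h, e.ge]
    have hKr : ‖z‖ ≤ (K : ℝ) := habs.trans hz₀K
    have h6 : min (δ/(4*K)) (1/2) * m ≤ (1/2) * m := by
      apply mul_le_mul_of_nonneg_right (min_le_right _ _) (by positivity)
    have hhalf : (1/2 : ℝ) * m ≤ (m : ℝ) - K := by linarith
    linarith

lemma hmz_factor_hasDerivAt (k : ℕ) (hk : 1 ≤ k) (a z : ℂ) (hne : a + z ≠ 0) :
    HasDerivAt (fun w => ((a + w) ^ k)⁻¹) (-(k : ℂ) * ((a + z) ^ (k + 1))⁻¹) z := by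
  obtain ⟨m, rfl⟩ : ∃ m, k = m + 1 := ⟨k - 1, by omega⟩
  have hb : HasDerivAt (fun w => a + w) 1 z := (hasDerivAt_id z).const_add a
  have hp := hb.pow (m + 1)
  have hinv := hp.inv (pow_ne_zero _ hne)
  refine hinv.congr_deriv ?_
  have : (m + 1 : ℕ) - 1 = m := by omega
  rw [this, Pi.pow_apply]
  field_simp
  ring

lemma hmz_prod_update_eq (r : ℕ) (s : Fin r → ℕ) (n : Fin r → ℕ) (z : ℂ) (i : Fin r) :
    ∏ j, (((n j : ℂ) + z) ^ (Function.update s i (s i + 1) j))⁻¹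
      = (((n i : ℂ) + z) ^ (s i + 1))⁻¹ * ∏ j ∈ univ.erase i, (((n j : ℂ) + z) ^ (s j))⁻¹ := by
  rw [← Finset.mul_prod_erase univ _ (mem_univ i), Function.update_self]
  congr 1
  apply Finset.prod_congr rfl
  intro j hj
  rw [Function.update_of_ne (Finset.ne_of_mem_erase hj)]

lemma hmz_term_hasDerivAt (r : ℕ) (s : Fin r → ℕ) (h1 : ∀ i, 1 ≤ s i) (n : Fin r → ℕ) (z : ℂ)
    (hne : ∀ i, ((n i : ℂ) + z) ≠ 0) :
    HasDerivAt (fun w => ∏ i, (((n i : ℂ) + w) ^ s i)⁻¹)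
      (-∑ i, (s i : ℂ) * ∏ j, (((n j : ℂ) + z) ^ (Function.update s i (s i + 1) j))⁻¹) z := by
  have hf : ∀ i ∈ (univ : Finset (Fin r)), HasDerivAt (fun w => (((n i : ℂ) + w) ^ s i)⁻¹)
      (-(s i : ℂ) * (((n i : ℂ) + z) ^ (s i + 1))⁻¹) z :=
    fun i _ => hmz_factor_hasDerivAt (s i) (h1 i) _ z (hne i)
  have h := HasDerivAt.fun_finset_prod hf
  refine h.congr_deriv ?_
  rw [← Finset.sum_neg_distrib]
  apply Finset.sum_congr rfl
  intro i _
  rw [hmz_prod_update_eq, smul_eq_mul]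
  ring

lemma hmz_term_norm_bound (r : ℕ) (hr : 0 < r) (t : Fin r → ℕ) (h1 : ∀ i, 1 ≤ t i)
    (h2 : 2 ≤ t ⟨0, hr⟩) (c : ℝ) (hc0 : 0 < c) (hc1 : c ≤ 1) (T : ℕ) (hT : ∑ i, t i ≤ T)
    (n : Fin r → ℕ) (hanti : StrictAnti n) (hpos : ∀ i, 0 < n i) (z : ℂ)
    (hlow : ∀ m : ℕ, 1 ≤ m → c * m ≤ ‖(m : ℂ) + z‖) :
    ‖∏ i, (((n i : ℂ) + z) ^ t i)⁻¹‖ ≤ (c ^ T)⁻¹ * ∏ i, ((n i : ℝ) ^ (1 + 1/r : ℝ))⁻¹ := by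
  have hcn : ∀ i, 0 < c * (n i : ℝ) := fun i => by
    have := hpos i; positivity
  have step1 : ‖∏ i, (((n i : ℂ) + z) ^ t i)⁻¹‖ ≤ ∏ i, ((c * (n i : ℝ)) ^ t i)⁻¹ := by
    rw [norm_prod]
    apply Finset.prod_le_prod (fun i _ => norm_nonneg _)
    intro i _
    rw [norm_inv, norm_pow]
    apply inv_anti₀ (pow_pos (hcn i) _)
    exact pow_le_pow_left₀ (hcn i).le (hlow (n i) (hpos i)) _
  have step2 : ∏ i, ((c * (n i : ℝ)) ^ t i)⁻¹
      = (c ^ (∑ i, t i))⁻¹ * ∏ i, (((n i : ℝ)) ^ t i)⁻¹ := by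
    simp_rw [mul_pow, mul_inv]
    rw [Finset.prod_mul_distrib]
    congr 1
    rw [Finset.prod_inv_distrib, Finset.prod_pow_eq_pow_sum]
  have step3 : (c ^ (∑ i, t i))⁻¹ ≤ (c ^ T)⁻¹ := by
    apply inv_anti₀ (by positivity)
    exact pow_le_pow_of_le_one hc0.le hc1 hT
  calc ‖∏ i, (((n i : ℂ) + z) ^ t i)⁻¹‖ ≤ ∏ i, ((c * (n i : ℝ)) ^ t i)⁻¹ := step1
    _ = (c ^ (∑ i, t i))⁻¹ * ∏ i, (((n i : ℝ)) ^ t i)⁻¹ := step2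
    _ ≤ (c ^ T)⁻¹ * ∏ i, ((n i : ℝ) ^ (1 + 1/r : ℝ))⁻¹ := by
        apply mul_le_mul step3 (hmz_prod_bound r hr t h1 h2 n hanti hpos)
          (Finset.prod_nonneg fun i _ => by positivity) (by positivity)

end Aux

/-- The Hurwitz multizeta function `He₊^s` as a sum over strictly decreasing
positive integer tuples. -/
noncomputable def HePlus (r : ℕ) (s : Fin r → ℕ) (z : ℂ) : ℂ :=
  ∑' n : {f : Fin r → ℕ // StrictAnti f ∧ ∀ i, 0 < f i},
    ∏ i, (((n.1 i : ℂ) + z) ^ s i)⁻¹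

/-- Differentiation property of Hurwitz multizeta functions. -/
theorem hurwitz_mzv_deriv (r : ℕ) (hr : 0 < r) (s : Fin r → ℕ)
    (h1 : ∀ i, 1 ≤ s i) (h2 : 2 ≤ s ⟨0, hr⟩) (z : ℂ) (hz : ∀ n : ℤ, z ≠ (n : ℂ)) :
    HasDerivAt (HePlus r s)
      (-∑ i, (s i : ℂ) * HePlus r (Function.update s i (s i + 1)) z) z := by
  set A := {f : Fin r → ℕ // StrictAnti f ∧ ∀ i, 0 < f i} with hA
  obtain ⟨ε, hε, c, hc0, hc1, hball⟩ := hmz_exists_ball_bound z hz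
  set T : ℕ := (∑ i, s i) + 1 with hT
  -- the basic summable majorant
  set v : A → ℝ := fun n => (c ^ T)⁻¹ * ∏ i, ((n.1 i : ℝ) ^ (1 + 1/r : ℝ))⁻¹ with hv
  have hv0 : ∀ n, 0 ≤ v n := by
    intro n
    apply mul_nonneg (by positivity) (Finset.prod_nonneg fun i _ => by positivity)
  have hsum_v : Summable v := by
    have hg : Summable (fun m : ℕ => (((m : ℝ)) ^ (1 + 1/r : ℝ))⁻¹) := by
      rw [Real.summable_nat_rpow_inv]
      have : (0:ℝ) < 1/(r:ℝ) := by positivity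
      linarith
    have hg0 : ∀ m : ℕ, 0 ≤ (((m : ℝ)) ^ (1 + 1/r : ℝ))⁻¹ := fun m => by positivity
    have hpi := hmz_summable_pi_prod hg hg0 r
    exact (hpi.subtype _).mul_left _
  -- update exponents are admissible
  have hupd1 : ∀ i j, 1 ≤ Function.update s i (s i + 1) j := by
    intro i j
    rcases eq_or_ne j i with rfl | hne
    · rw [Function.update_self]; omega
    · rw [Function.update_of_ne hne]; exact h1 j
  have hupd2 : ∀ i, 2 ≤ Function.update s i (s i + 1) ⟨0, hr⟩ := by
    intro i
    rcases eq_or_ne (⟨0, hr⟩ : Fin r) i with h | hne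
    · rw [← h, Function.update_self]; omega
    · rw [Function.update_of_ne hne]; exact h2
  have hupdsum : ∀ i, ∑ j, Function.update s i (s i + 1) j = T := by
    intro i
    rw [Finset.sum_update_of_mem (mem_univ i), hT]
    have e1 : (univ \ {i} : Finset (Fin r)) = univ.erase i := by
      rw [Finset.sdiff_singleton_eq_erase]
    have e2 : ∑ j, s j = s i + ∑ x ∈ univ.erase i, s x :=
      (Finset.add_sum_erase univ s (mem_univ i)).symm
    rw [e1]
    omega
  -- terms and their bounds
  set term : A → ℂ → ℂ := fun n w => ∏ i, (((n.1 i : ℂ) + w) ^ s i)⁻¹ with hterm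
  set pterm : Fin r → A → ℂ → ℂ :=
    fun i n w => ∏ j, (((n.1 j : ℂ) + w) ^ (Function.update s i (s i + 1) j))⁻¹ with hpterm
  have hbound_t : ∀ n : A, ∀ w ∈ Metric.ball z ε, ‖term n w‖ ≤ v n := by
    intro n w hw
    exact hmz_term_norm_bound r hr s h1 h2 c hc0 hc1 T (by omega) n.1 n.2.1 n.2.2 w
      (fun m hm => hball w hw m hm)
  have hbound_p : ∀ i, ∀ n : A, ∀ w ∈ Metric.ball z ε, ‖pterm i n w‖ ≤ v n := by
    intro i n w hw
    exact hmz_term_norm_bound r hr _ (hupd1 i) (hupd2 i) c hc0 hc1 T (by rw [hupdsum i]) n.1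
      n.2.1 n.2.2 w (fun m hm => hball w hw m hm)
  have hne : ∀ w ∈ Metric.ball z ε, ∀ n : A, ∀ i, ((n.1 i : ℂ) + w) ≠ 0 := by
    intro w hw n i h
    have := hball w hw (n.1 i) (n.2.2 i)
    rw [h] at this
    simp only [norm_zero] at this
    have h0 := n.2.2 i
    nlinarith [this, (by exact_mod_cast h0 : (1:ℝ) ≤ (n.1 i : ℝ))]
  -- derivative of each term
  set dterm : A → ℂ → ℂ := fun n w => -∑ i, (s i : ℂ) * pterm i n w with hdterm
  have hderiv : ∀ w ∈ Metric.ball z ε, ∀ n : A, HasDerivAt (term n) (dterm n w) w :=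
    fun w hw n => hmz_term_hasDerivAt r s h1 n.1 w (hne w hw n)
  -- majorant for dterm
  set u : A → ℝ := fun n => (∑ i, (s i : ℝ)) * v n with hu
  have hsum_u : Summable u := hsum_v.mul_left _
  have hbound_d : ∀ n : A, ∀ w ∈ Metric.ball z ε, ‖dterm n w‖ ≤ u n := by
    intro n w hw
    rw [hdterm]
    simp only [norm_neg]
    calc ‖∑ i, (s i : ℂ) * pterm i n w‖ ≤ ∑ i, ‖(s i : ℂ) * pterm i n w‖ := norm_sum_le _ _
      _ ≤ ∑ i, (s i : ℝ) * v n := by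
          apply Finset.sum_le_sum
          intro i _
          rw [norm_mul, Complex.norm_natCast]
          exact mul_le_mul_of_nonneg_left (hbound_p i n w hw) (by positivity)
      _ = u n := by simp only [hu]; rw [Finset.sum_mul]
  -- summability of the term series everywhere on the ball
  have hsummable_t : ∀ w ∈ Metric.ball z ε, Summable (fun n : A => term n w) := by
    intro w hw
    exact Summable.of_norm_bounded hsum_v (fun n => hbound_t n w hw)
  have hsummable_p : ∀ i, Summable (fun n : A => (s i : ℂ) * pterm i n z) := by
    intro i
    apply Summable.of_norm_bounded (hsum_v.mul_left ((s i : ℝ)))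
    intro n
    rw [norm_mul, Complex.norm_natCast]
    exact mul_le_mul_of_nonneg_left (hbound_p i n z (Metric.mem_ball_self hε))
      (by positivity)
  -- the uniform-limit derivative theorem
  have main : HasDerivAt (HePlus r s) (∑' n : A, dterm n z) z := by
    apply hasDerivAt_of_tendstoUniformlyOn
      (f := fun (t : Finset A) (w : ℂ) => ∑ n ∈ t, term n w)
      (f' := fun (t : Finset A) (w : ℂ) => ∑ n ∈ t, dterm n w)
      (Metric.isOpen_ball)
      (tendstoUniformlyOn_tsum hsum_u (fun n w hw => hbound_d n w hw))
      (Filter.Eventually.of_forall ?_) ?_ (Metric.mem_ball_self hε)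
    · intro t w hw
      exact HasDerivAt.fun_sum (fun n _ => hderiv w hw n)
    · intro w hw
      exact ((hsummable_t w hw).hasSum)
  have key : (∑' n : A, dterm n z)
      = -∑ i, (s i : ℂ) * HePlus r (Function.update s i (s i + 1)) z := by
    rw [hdterm]
    simp only
    rw [tsum_neg]
    congr 1
    rw [Summable.tsum_finsetSum (fun i _ => hsummable_p i)]
    apply Finset.sum_congr rfl
    intro i _
    rw [tsum_mul_left]
    rfl
  rwa [key] at main
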